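/- For any finite simple graph G, the clique number of G is at most the minimum rainbow neighbourhood number: ω(G) ≤ r^-_χ(G). Equivalently, for every proper colouring c of G using exactly χ(G) colours, the number of vertices yielding a rainbow neighbourhood with respect to c is at least ω(G). -/
import Mathlib


open SimpleGraph

/-- A vertex `v` yields a rainbow neighbourhood w.r.t. the colouring `c` if its closed
neighbourhood `N[v]` contains a vertex of every colour class. -/
def yieldsRainbow {V : Type*} {k : ℕ} (G : SimpleGraph V) (c : G.Coloring (Fin k)) (v : V) :
    Prop :=
  ∀ i : Fin k, ∃ u : V, (u = v ∨ G.Adj v u) ∧ c u = i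

/-- The number of vertices yielding a rainbow neighbourhood w.r.t. `c`. -/
noncomputable def rainbowCount {V : Type*} [Fintype V] {k : ℕ} (G : SimpleGraph V)
    (c : G.Coloring (Fin k)) : ℕ :=
  Nat.card {v : V // yieldsRainbow G c v}

/-- The minimum number of vertices yielding a rainbow neighbourhood, over all proper
colourings with exactly `k` colours. -/
noncomputable def rMin {V : Type*} [Fintype V] (G : SimpleGraph V) (k : ℕ) : ℕ :=
  sInf (Set.range fun c : G.Coloring (Fin k) => rainbowCount G c)

/-- The maximum number of vertices yielding a rainbow neighbourhood, over all proper
colourings with exactly `k` colours. -/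
noncomputable def rMax {V : Type*} [Fintype V] (G : SimpleGraph V) (k : ℕ) : ℕ :=
  sSup (Set.range fun c : G.Coloring (Fin k) => rainbowCount G c)


lemma exists_rainbow {V : Type*} [Fintype V] {k : ℕ} (G : SimpleGraph V)
    (c : G.Coloring (Fin k)) (hk : G.chromaticNumber = k) (i : Fin k) :
    ∃ v : V, c v = i ∧ yieldsRainbow G c v := by
  classical
  by_contra h
  push_neg at h
  have hchoice : ∀ v : V, c v = i → ∃ j : Fin k, ∀ u : V, (u = v ∨ G.Adj v u) → c u ≠ j := by
    intro v hv
    have hnr := h v hv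
    unfold yieldsRainbow at hnr
    push_neg at hnr
    exact hnr
  choose f hf using hchoice
  let c' : V → Fin k := fun v => if hv : c v = i then f v hv else c v
  have hne : ∀ v, c' v ≠ i := by
    intro v
    by_cases hv : c v = i
    · simp only [c', dif_pos hv]
      have := hf v hv v (Or.inl rfl)
      rw [hv] at this
      exact fun hcon => this hcon.symm
    · simp only [c', dif_neg hv]; exact hv
  have hproper : ∀ {u v : V}, G.Adj u v → c' u ≠ c' v := by
    intro u v hadj
    by_cases hu : c u = i <;> by_cases hv : c v = i
    · exact absurd (hv.trans hu.symm) (c.valid hadj.symm)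
    · simp only [c', dif_pos hu, dif_neg hv]
      exact fun hcon => hf u hu v (Or.inr hadj) hcon.symm
    · simp only [c', dif_neg hu, dif_pos hv]
      exact fun hcon => hf v hv u (Or.inr hadj.symm) hcon
    · simp only [c', dif_neg hu, dif_neg hv]
      exact c.valid hadj
  let c'' : G.Coloring {j : Fin k // j ≠ i} :=
    Coloring.mk (fun v => ⟨c' v, hne v⟩) (by
      intro u v hadj
      simp only [Ne, Subtype.mk.injEq]
      exact hproper hadj)
  have hcard : Fintype.card {j : Fin k // j ≠ i} = k - 1 := by
    simp [Fintype.card_subtype_compl, Fintype.card_subtype_eq]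
  have hcol : G.Colorable (k - 1) := hcard ▸ c''.colorable
  have hle : G.chromaticNumber ≤ (k - 1 : ℕ) := hcol.chromaticNumber_le
  rw [hk, Nat.cast_le] at hle
  have hkpos : 0 < k := i.pos
  omega

/-- The clique number is at most the minimum rainbow neighbourhood
number: `ω(G) ≤ r⁻_χ(G)`; equivalently, every proper colouring with exactly `χ(G)`
colours has at least `ω(G)` vertices yielding rainbow neighbourhoods. -/
theorem cliqueNum_le_rMin {V : Type*} [Fintype V] (G : SimpleGraph V) (k : ℕ)
    (hk : G.chromaticNumber = k) :
    G.cliqueNum ≤ rMin G k ∧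
      ∀ c : G.Coloring (Fin k), G.cliqueNum ≤ rainbowCount G c := by
  have key : ∀ c : G.Coloring (Fin k), G.cliqueNum ≤ rainbowCount G c := by
    intro c
    have hω : G.cliqueNum ≤ k := by
      obtain ⟨s, hs⟩ := G.exists_isNClique_cliqueNum
      have := hs.1.card_le_of_coloring c
      simpa [hs.2] using this
    have hkle : k ≤ rainbowCount G c := by
      choose v hv1 hv2 using fun i => exists_rainbow G c hk i
      have hinj : Function.Injective
          (fun i => (⟨v i, hv2 i⟩ : {v : V // yieldsRainbow G c v})) := by
        intro a b hab
        have := congrArg (fun x : {v : V // yieldsRainbow G c v} => c x.1) hab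
        simpa [hv1] using this
      calc k = Nat.card (Fin k) := by simp
        _ ≤ Nat.card {v : V // yieldsRainbow G c v} :=
            Nat.card_le_card_of_injective _ hinj
    exact hω.trans hkle
  refine ⟨?_, key⟩
  have hcol : G.Colorable k := chromaticNumber_le_iff_colorable.mp hk.le
  obtain ⟨c⟩ := hcol
  exact le_csInf ⟨_, ⟨c, rfl⟩⟩ (by rintro n ⟨c', rfl⟩; exact key c')
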